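/- With the weak selection rule: let $A$ have unit-norm columns, $\mu_1$ its Babel function, $0 < \lambda \leq 1$, and suppose $\mu_1(L) < \lambda(1 - \mu_1(L-1))$. Then for any nonzero $L$-sparse $x$ with support $\Lambda$ and $y = Ax$, any index $j$ satisfying $|\langle a_j, y\rangle| \geq \lambda \max_{j'} |\langle a_{j'}, y\rangle|$ must lie in $\Lambda$. -/

import Mathlib

/-- Weak OMP selection: if `μ₁(L) < λ(1 - μ₁(L-1))` with weakness
parameter `0 < λ ≤ 1`, then for any nonzero `L`-sparse `x` with support `Λ` and
`y = Ax`, every index whose correlation is at least `λ` times the maximal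
correlation lies in `Λ`. -/
theorem stmt_18 (T P L : ℕ) (hL : 1 ≤ L)
    (A : Matrix (Fin T) (Fin P) ℂ)
    (hnorm : ∀ j, ∑ t, ‖A t j‖ ^ 2 = 1)
    (μ₁ : ℕ → ℝ)
    (hμ₁ : ∀ l, IsGreatest
      {x : ℝ | ∃ (Ω : Finset (Fin P)) (ω : Fin P),
        Ω.card ≤ l ∧ ω ∉ Ω ∧
        x = ∑ j ∈ Ω, ‖∑ t, (starRingEnd ℂ) (A t j) * A t ω‖} (μ₁ l))
    (lam : ℝ) (hlam0 : 0 < lam) (hlam1 : lam ≤ 1)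
    (hERC : μ₁ L < lam * (1 - μ₁ (L - 1)))
    (x : Fin P → ℂ) (hx : x ≠ 0) (Λ : Finset (Fin P))
    (hΛ : ∀ j, x j ≠ 0 ↔ j ∈ Λ) (hcard : Λ.card ≤ L)
    (y : Fin T → ℂ) (hy : y = A.mulVec x)
    (hP : (Finset.univ : Finset (Fin P)).Nonempty) :
    ∀ j : Fin P,
      lam * (Finset.univ.sup' hP
          (fun j' => ‖∑ t, (starRingEnd ℂ) (A t j') * y t‖)) ≤
        ‖∑ t, (starRingEnd ℂ) (A t j) * y t‖ →
      j ∈ Λ := by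
  intro j hj
  by_contra hjΛ
  set G : Fin P → Fin P → ℂ := fun a b => ∑ t, (starRingEnd ℂ) (A t a) * A t b with hG
  have hGsym : ∀ a b, ‖G a b‖ = ‖G b a‖ := by
    intro a b
    have h : G b a = (starRingEnd ℂ) (G a b) := by
      simp only [hG, map_sum, map_mul, RingHomCompTriple.comp_apply, Complex.conj_conj,
        RingHom.id_apply, Complex.conj_conj]
      exact Finset.sum_congr rfl fun t _ => by ring
    rw [h, Complex.norm_conj]
  have hkey : ∀ a, ∑ t, (starRingEnd ℂ) (A t a) * y t = ∑ k ∈ Λ, x k * G a k := by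
    intro a
    subst hy
    simp only [Matrix.mulVec, dotProduct]
    have : ∑ t, (starRingEnd ℂ) (A t a) * ∑ k, A t k * x k
        = ∑ k, x k * G a k := by
      simp_rw [Finset.mul_sum]
      rw [Finset.sum_comm]
      refine Finset.sum_congr rfl fun k _ => ?_
      rw [hG, Finset.mul_sum]
      exact Finset.sum_congr rfl fun t _ => by ring
    rw [this]
    refine (Finset.sum_subset Λ.subset_univ fun k _ hk => ?_).symm
    have : x k = 0 := by
      by_contra h; exact hk ((hΛ k).mp h)
    simp [this]
  -- nonnegativity of μ₁
  have hμnn : ∀ l, 0 ≤ μ₁ l := by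
    intro l
    obtain ⟨ω, -⟩ := hP
    exact (hμ₁ l).2 ⟨∅, ω, by simp⟩
  have h1μ : 0 < 1 - μ₁ (L - 1) := by
    nlinarith [hμnn L, hμnn (L-1)]
  -- Λ nonempty, pick k₀ maximizing |x k|
  obtain ⟨k1, hk1⟩ := Function.ne_iff.mp hx
  have hk1Λ : k1 ∈ Λ := (hΛ k1).mp hk1
  have hΛne : Λ.Nonempty := ⟨k1, hk1Λ⟩
  obtain ⟨k₀, hk₀Λ, hk₀⟩ := Finset.exists_mem_eq_sup' hΛne (fun k => ‖x k‖)
  set M : ℝ := ‖x k₀‖ with hM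
  have hMmax : ∀ k ∈ Λ, ‖x k‖ ≤ M := by
    intro k hk
    exact le_of_le_of_eq (Finset.le_sup' (fun k => ‖x k‖) hk) hk₀
  have hMpos : 0 < M :=
    lt_of_lt_of_le (norm_pos_iff.mpr hk1) (hMmax k1 hk1Λ)
  -- generic sum bound
  have hsumbound : ∀ (Ω : Finset (Fin P)) (a : Fin P) (l : ℕ), Ω ⊆ Λ → a ∉ Ω → Ω.card ≤ l →
      ‖∑ k ∈ Ω, x k * G a k‖ ≤ M * μ₁ l := by
    intro Ω a l hΩΛ haΩ hcl
    calc ‖∑ k ∈ Ω, x k * G a k‖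
        ≤ ∑ k ∈ Ω, ‖x k * G a k‖ := norm_sum_le _ _
      _ ≤ ∑ k ∈ Ω, M * ‖G k a‖ := by
          refine Finset.sum_le_sum fun k hk => ?_
          rw [norm_mul, ← hGsym a k]
          exact mul_le_mul_of_nonneg_right (hMmax k (hΩΛ hk)) (norm_nonneg _)
      _ = M * ∑ k ∈ Ω, ‖G k a‖ := (Finset.mul_sum _ _ _).symm
      _ ≤ M * μ₁ l := by
          refine mul_le_mul_of_nonneg_left ?_ hMpos.le
          exact (hμ₁ l).2 ⟨Ω, a, hcl, haΩ, rfl⟩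
  -- upper bound for j ∉ Λ
  have hub : ‖∑ t, (starRingEnd ℂ) (A t j) * y t‖ ≤ M * μ₁ L := by
    rw [hkey j]
    exact hsumbound Λ j L le_rfl hjΛ hcard
  -- G k₀ k₀ = 1
  have hG11 : G k₀ k₀ = 1 := by
    have h1 : G k₀ k₀ = ((∑ t, ‖A t k₀‖ ^ 2 : ℝ) : ℂ) := by
      rw [hG, Complex.ofReal_sum]
      refine Finset.sum_congr rfl fun t _ => ?_
      rw [Complex.sq_norm]
      exact Complex.normSq_eq_conj_mul_self.symm
    rw [h1, hnorm k₀, Complex.ofReal_one]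
  -- lower bound for k₀
  have hlb : M * (1 - μ₁ (L - 1)) ≤
      ‖∑ t, (starRingEnd ℂ) (A t k₀) * y t‖ := by
    rw [hkey k₀, ← Finset.insert_erase hk₀Λ, Finset.sum_insert (Finset.notMem_erase _ _),
      hG11, mul_one]
    have herr : ‖∑ k ∈ Λ.erase k₀, x k * G k₀ k‖ ≤ M * μ₁ (L - 1) := by
      refine hsumbound _ _ _ (Finset.erase_subset _ _) (Finset.notMem_erase _ _) ?_
      calc (Λ.erase k₀).card = Λ.card - 1 := Finset.card_erase_of_mem hk₀Λ
        _ ≤ L - 1 := Nat.sub_le_sub_right hcard 1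
    calc M * (1 - μ₁ (L - 1)) = M - M * μ₁ (L - 1) := by ring
      _ ≤ ‖x k₀‖ - ‖∑ k ∈ Λ.erase k₀, x k * G k₀ k‖ := by
          rw [← hM]; linarith
      _ ≤ ‖x k₀ + ∑ k ∈ Λ.erase k₀, x k * G k₀ k‖ := by
          have h3 := norm_add_le (x k₀ + ∑ k ∈ Λ.erase k₀, x k * G k₀ k)
            (-(∑ k ∈ Λ.erase k₀, x k * G k₀ k))
          simp only [add_neg_cancel_right, norm_neg] at h3
          linarith
  -- finish
  have hsup : ‖∑ t, (starRingEnd ℂ) (A t k₀) * y t‖ ≤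
      Finset.univ.sup' hP (fun j' => ‖∑ t, (starRingEnd ℂ) (A t j') * y t‖) :=
    Finset.le_sup' (fun j' => ‖∑ t, (starRingEnd ℂ) (A t j') * y t‖)
      (Finset.mem_univ k₀)
  have : lam * (M * (1 - μ₁ (L - 1))) ≤ M * μ₁ L := by
    calc lam * (M * (1 - μ₁ (L - 1)))
        ≤ lam * ‖∑ t, (starRingEnd ℂ) (A t k₀) * y t‖ :=
          mul_le_mul_of_nonneg_left hlb hlam0.le
      _ ≤ lam * Finset.univ.sup' hP (fun j' => ‖∑ t, (starRingEnd ℂ) (A t j') * y t‖) :=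
          mul_le_mul_of_nonneg_left hsup hlam0.le
      _ ≤ ‖∑ t, (starRingEnd ℂ) (A t j) * y t‖ := hj
      _ ≤ M * μ₁ L := hub
  nlinarith [hMpos, hERC]
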